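/- Define the qubit displacement operators D : (ZMod 2 × ZMod 2) → Matrix (Fin 2) (Fin 2) ℂ by D(0,0) = 1, D(0,1) = X := !![0,1;1,0], D(1,0) = Z := !![1,0;0,-1], D(1,1) = i • (Z * X), and the Pauli frame F(λ) := (1/2) • D(λ), G(λ) := D(λ). Let U ∈ Matrix (Fin 2) (Fin 2) ℂ be a unitary such that for every λ ∈ (ZMod 2)² there exist μ ∈ (ZMod 2)² and ε ∈ {1, -1} with U * D(λ) * Uᴴ = ε • D(μ). Then for every λ ∈ (ZMod 2)²: Σ_{λ' ∈ (ZMod 2)²} |Tr(F(λ') * U * G(λ) * Uᴴ)| = 1. -/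

import Mathlib

open Matrix

/-- The Pauli `X` matrix. -/
noncomputable def PauliX : Matrix (Fin 2) (Fin 2) ℂ := !![0, 1; 1, 0]

/-- The Pauli `Z` matrix. -/
noncomputable def PauliZ : Matrix (Fin 2) (Fin 2) ℂ := !![1, 0; 0, -1]

/-- The qubit displacement operators `D(p,q) = i^{pq} Z^p X^q`. -/
noncomputable def Disp : ZMod 2 × ZMod 2 → Matrix (Fin 2) (Fin 2) ℂ := fun lam =>
  if lam = (0, 0) then 1
  else if lam = (0, 1) then PauliX
  else if lam = (1, 0) then PauliZ
  else Complex.I • (PauliZ * PauliX)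

lemma Disp00 : Disp (0,0) = !![1,0;0,1] := by
  rw [Disp, if_pos rfl, Matrix.one_fin_two]

lemma Disp01 : Disp (0,1) = !![0,1;1,0] := by
  rw [Disp, if_neg (by decide), if_pos rfl, PauliX]

lemma Disp10 : Disp (1,0) = !![1,0;0,-1] := by
  rw [Disp, if_neg (by decide), if_neg (by decide), if_pos rfl, PauliZ]

lemma Disp11 : Disp (1,1) = !![0, Complex.I; -Complex.I, 0] := by
  rw [Disp, if_neg (by decide), if_neg (by decide), if_neg (by decide), PauliZ, PauliX]
  ext i j
  fin_cases i <;> fin_cases j <;>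
    simp [Matrix.mul_apply, Fin.sum_univ_succ]

lemma Disp_trace_mul (a b : ZMod 2 × ZMod 2) :
    (Disp a * Disp b).trace = if a = b then 2 else 0 := by
  have hall : ∀ x : ZMod 2 × ZMod 2, x = (0,0) ∨ x = (0,1) ∨ x = (1,0) ∨ x = (1,1) := by
    decide
  have ha := hall a
  have hb := hall b
  rcases ha with h|h|h|h <;> rcases hb with h'|h'|h'|h' <;> rw [h, h'] <;>
    simp only [Disp00, Disp01, Disp10, Disp11] <;>
    norm_num [Matrix.trace_fin_two, Matrix.mul_apply, Fin.sum_univ_succ, Prod.ext_iff]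

/-- A single-qubit Clifford gate, i.e. a unitary mapping each displacement
operator to a signed displacement operator under conjugation, has negativity
equal to `1` in the Pauli frame `F(λ) = (1/2) • D(λ)`, `G(λ) = D(λ)`:
every column of its transition quasi-probability kernel has ℓ1-norm `1`. -/
theorem clifford_gate_pauli_frame_negativity_one
    (U : Matrix (Fin 2) (Fin 2) ℂ)
    (hU : U ∈ Matrix.unitaryGroup (Fin 2) ℂ)
    (hClif : ∀ lam : ZMod 2 × ZMod 2, ∃ μ : ZMod 2 × ZMod 2, ∃ ε : ℂ,
      (ε = 1 ∨ ε = -1) ∧ U * Disp lam * Uᴴ = ε • Disp μ)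
    (lam : ZMod 2 × ZMod 2) :
    ∑ lam' : ZMod 2 × ZMod 2,
      ‖(((1 / 2 : ℂ) • Disp lam') * U * Disp lam * Uᴴ).trace‖ = 1 := by
  obtain ⟨μ, ε, hε, h⟩ := hClif lam
  have habs : ‖ε‖ = 1 := by rcases hε with h|h <;> simp [h]
  have key : ∀ lam' : ZMod 2 × ZMod 2,
      (((1 / 2 : ℂ) • Disp lam') * U * Disp lam * Uᴴ).trace
        = (1/2 * ε) * (Disp lam' * Disp μ).trace := by
    intro lam'
    have : ((1 / 2 : ℂ) • Disp lam') * U * Disp lam * Uᴴ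
        = (1/2 * ε : ℂ) • (Disp lam' * Disp μ) := by
      simp only [smul_mul_assoc, mul_assoc]
      rw [← mul_assoc U (Disp lam) Uᴴ, h, mul_smul_comm, smul_smul]
    rw [this, trace_smul, smul_eq_mul]
  calc ∑ lam' : ZMod 2 × ZMod 2,
      ‖(((1 / 2 : ℂ) • Disp lam') * U * Disp lam * Uᴴ).trace‖
      = ∑ lam' : ZMod 2 × ZMod 2,
        ‖(1/2 * ε) * (Disp lam' * Disp μ).trace‖ := by
        exact Finset.sum_congr rfl fun x _ => by rw [key x]
    _ = 1 := by
        rw [Finset.sum_eq_single μ]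
        · simp [Disp_trace_mul, _root_.map_mul, habs]
        · intro b _ hb
          simp [Disp_trace_mul, hb]
        · simp
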